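/- Let K be a generic closed oriented singular curve in ℝP² whose only singularities are cusps of type 1. At a type 1 cusp of K, the orientations of the tangent geodesic τ_p and the normal geodesic ν_p both reverse as the cusp is traversed, and consequently the black-and-white coloring of the tangent-normal frame F_p is well-defined (unchanged) as p passes through the cusp point. (This fails if type 2 cusps are allowed.) -/

import Mathlib

/-!
Common setting: the real projective plane `ℝP²` is modelled by the unit sphere in
Euclidean 3-space `V3`, with antipodal points identified (`projEq`), endowed with the
spherical metric inherited from the round 2-sphere of radius 1.  Geodesics (projective
lines) are intersections of the sphere with planes through the origin and are recorded
by their poles; the duality of `ℝP²` sends the line with pole `m` to the point `[m]`.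
A closed curve in `ℝP²` is recorded by a smooth unit-sphere lift which is periodic or
antiperiodic of period 1.
-/

open Real Set Filter Topology RealInnerProductSpace
open scoped Classical

noncomputable section

/-- Euclidean 3-space, the ambient space of the unit sphere double covering `ℝP²`. -/
abbrev V3 := EuclideanSpace ℝ (Fin 3)

/-- The cross product on `V3`. -/
def cross (x y : V3) : V3 :=
  (EuclideanSpace.equiv (Fin 3) ℝ).symm
    ![x 1 * y 2 - x 2 * y 1, x 2 * y 0 - x 0 * y 2, x 0 * y 1 - x 1 * y 0]

/-- Two vectors represent the same point of `ℝP²`. -/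
def projEq (x y : V3) : Prop := x = y ∨ x = -y

/-- `y` is a nonzero multiple of `x`; for poles this means "the same projective line". -/
def Parallel (x y : V3) : Prop := x ≠ 0 ∧ y ≠ 0 ∧ ∃ c : ℝ, y = c • x

/-- A sign, taken to be `1` at `0`. -/
def posSign (a : ℝ) : ℝ := if 0 ≤ a then 1 else -1

/-- A fundamental domain of parameters: a closed curve of period 1 is traversed once as
the parameter runs over `Dom`. -/
def Dom : Set ℝ := Set.Ico 0 1

/-- The open sector (pair of vertically opposite sectors, a well-defined region of `ℝP²`)
cut out by the two projective lines with poles `m₁`, `m₂` and a choice of signs. -/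
def sector (m₁ m₂ : V3) (ε₁ ε₂ : ℝ) : Set V3 :=
  {x | 0 < ε₁ * ⟪m₁, x⟫ ∧ 0 < ε₂ * ⟪m₂, x⟫}

/-- A closed oriented curve in `ℝP²`: a smooth unit-sphere lift, periodic or antiperiodic
of period `1`.  (The curve is smooth as a map but may have cusps, i.e. points where the
velocity vanishes.) -/
structure RPCurve where
  γ : ℝ → V3
  smooth : ContDiff ℝ (⊤ : ℕ∞) γ
  unit : ∀ t, ‖γ t‖ = 1
  closed : (∀ t, γ (t + 1) = γ t) ∨ (∀ t, γ (t + 1) = -γ t)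

namespace RPCurve

variable (K : RPCurve)

/-- Velocity. -/
def vel (t : ℝ) : V3 := deriv K.γ t

/-- Acceleration. -/
def acc (t : ℝ) : V3 := deriv (deriv K.γ) t

/-- A regular (immersed) parameter. -/
def Regular (t : ℝ) : Prop := K.vel t ≠ 0

/-- A cusp: a singular parameter of the curve. -/
def IsCusp (t : ℝ) : Prop := K.vel t = 0

/-- The unit tangent vector (orientation of the tangent geodesic `τ_p`). -/
def unitTangent (t : ℝ) : V3 := ‖K.vel t‖⁻¹ • K.vel t

/-- The pole of the tangent geodesic `τ_p` at a regular point. -/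
def tangentPole (t : ℝ) : V3 := cross (K.γ t) (K.vel t)

/-- The pole of the tangent geodesic, defined also at (generic, semicubical) cusps. -/
def suppPole (t : ℝ) : V3 :=
  if K.Regular t then K.tangentPole t else cross (K.γ t) (K.acc t)

/-- Geodesic curvature of the spherical lift. -/
def curv (t : ℝ) : ℝ :=
  ⟪K.acc t, cross (K.γ t) (K.unitTangent t)⟫ / ‖K.vel t‖ ^ 2

/-- An inflection point: a regular point with vanishing geodesic curvature. -/
def IsInflection (t : ℝ) : Prop := K.Regular t ∧ K.curv t = 0

/-- Unit normal at `K.γ t` pointing towards the centre of curvature; this records the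
orientation of the normal geodesic `ν_p`. -/
def normalDir (t : ℝ) : V3 := posSign (K.curv t) • cross (K.γ t) (K.unitTangent t)

/-- The centre of curvature `c_p` (the lift lying at spherical distance `≤ π/2` from `p`,
so that the oriented segment of `ν_p` from `p` to `c_p` is the shorter one). -/
def center (t : ℝ) : V3 :=
  (Real.sqrt (1 + K.curv t ^ 2))⁻¹ • (|K.curv t| • K.γ t + K.normalDir t)

/-- The point `a_p` at distance `π/2` from `p` along the (oriented) tangent geodesic. -/
def antipode (t : ℝ) : V3 := K.unitTangent t

/-- The tangent geodesic `τ_p` as a subset of the sphere. -/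
def tGeo (t : ℝ) : Set V3 := {x | ‖x‖ = 1 ∧ ⟪K.tangentPole t, x⟫ = 0}

/-- The normal geodesic `ν_p` as a subset of the sphere (its pole is the velocity). -/
def nGeo (t : ℝ) : Set V3 := {x | ‖x‖ = 1 ∧ ⟪K.vel t, x⟫ = 0}


/-- A cusp of type 1: the two branches of `K` at the cusp locally lie on opposite sides
of the tangent geodesic at the cusp. -/
def IsCusp1 (t : ℝ) : Prop :=
  K.IsCusp t ∧ K.acc t ≠ 0 ∧
    ∃ δ > 0, ∀ u ∈ Ioo (t - δ) t, ∀ v ∈ Ioo t (t + δ),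
      ⟪cross (K.γ t) (K.acc t), K.γ u⟫ * ⟪cross (K.γ t) (K.acc t), K.γ v⟫ < 0

/-- Sign matching the lift of the branch at `t` with the point `K.γ s`. -/
def liftSign (s t : ℝ) : ℝ := if K.γ t = K.γ s then 1 else -1

/-- A crossing of `K`: two regular branches through one point of `ℝP²`. -/
def IsCrossing (s t : ℝ) : Prop :=
  s ≠ t ∧ K.Regular s ∧ K.Regular t ∧ projEq (K.γ s) (K.γ t)

/-- The local arc of `K` at `s` (lifted by the sign `σ`; forward iff `dir`) lies in the
region `S`. -/
def ArcIn (s : ℝ) (σ : ℝ) (dir : Bool) (S : Set V3) : Prop :=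
  ∃ δ > 0, ∀ v : ℝ, (if dir then v ∈ Ioo s (s + δ) else v ∈ Ioo (s - δ) s) → σ • K.γ v ∈ S

/-- The four local arcs of `K` near the crossing `(s,t)`: parameter, lift, direction. -/
def crossArc (s t : ℝ) : Fin 4 → ℝ × ℝ × Bool
  | 0 => (s, 1, false)
  | 1 => (s, 1, true)
  | 2 => (t, K.liftSign s t, false)
  | 3 => (t, K.liftSign s t, true)

/-- A crossing of type 1: of the two pairs of vertically opposite sectors cut out by the
two tangent geodesics, consider the pair whose angle is `< π/2`; one local arc lies in one
of the two opposite small sectors and another local arc lies in the other. -/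
def IsCrossing1 (s t : ℝ) : Prop :=
  K.IsCrossing s t ∧
    ∃ ε₁ ε₂ : ℝ, (ε₁ = 1 ∨ ε₁ = -1) ∧ (ε₂ = 1 ∨ ε₂ = -1) ∧
      ε₁ * ε₂ * ⟪K.tangentPole s, K.tangentPole t⟫ < 0 ∧
      ∃ i j : Fin 4, i ≠ j ∧
        K.ArcIn (K.crossArc s t i).1 (K.crossArc s t i).2.1 (K.crossArc s t i).2.2
          (sector (K.tangentPole s) (K.tangentPole t) ε₁ ε₂) ∧
        K.ArcIn (K.crossArc s t j).1 (K.crossArc s t j).2.1 (K.crossArc s t j).2.2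
          (sector (K.tangentPole s) (K.tangentPole t) (-ε₁) (-ε₂))

/-- A crossing of type 2: two of the local arcs lie in the same small sector. -/
def IsCrossing2 (s t : ℝ) : Prop :=
  K.IsCrossing s t ∧
    ∃ ε₁ ε₂ : ℝ, (ε₁ = 1 ∨ ε₁ = -1) ∧ (ε₂ = 1 ∨ ε₂ = -1) ∧
      ε₁ * ε₂ * ⟪K.tangentPole s, K.tangentPole t⟫ < 0 ∧
      ∃ i j : Fin 4, i ≠ j ∧
        K.ArcIn (K.crossArc s t i).1 (K.crossArc s t i).2.1 (K.crossArc s t i).2.2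
          (sector (K.tangentPole s) (K.tangentPole t) ε₁ ε₂) ∧
        K.ArcIn (K.crossArc s t j).1 (K.crossArc s t j).2.1 (K.crossArc s t j).2.2
          (sector (K.tangentPole s) (K.tangentPole t) ε₁ ε₂)

/-- The geodesic with pole `m` supports `K` at the parameter `t`: either it is tangent to
`K` at a regular point, or it passes through a cusp of `K`. -/
def Touches (t : ℝ) (m : V3) : Prop :=
  (K.Regular t ∧ Parallel m (K.tangentPole t)) ∨ (K.IsCusp t ∧ ⟪m, K.γ t⟫ = 0)

/-- The local branch of `K` at `t` (lifted by `σ`) lies, near `K.γ t`, on the side `ε` of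
the geodesic with pole `m`. -/
def SideAt (t : ℝ) (σ : ℝ) (m : V3) (ε : ℝ) : Prop :=
  ∃ δ > 0, ∀ v : ℝ, v ≠ t → |v - t| < δ → 0 < ε * ⟪m, σ • K.γ v⟫

/-- `(s,t,m)` is a double supporting geodesic of `K`: the geodesic with pole `m` is a
double tangent geodesic, a tangent geodesic through a cusp, or a geodesic through two
cusps, at the two distinct points `K.γ s`, `K.γ t`. -/
def IsDSG (s t : ℝ) (m : V3) : Prop :=
  ¬ projEq (K.γ s) (K.γ t) ∧ m ≠ 0 ∧ K.Touches s m ∧ K.Touches t m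

/-- A double supporting geodesic of type 1: the two local arcs of `K` lie on the same
side of the shorter (< π/2) of the two segments into which the two support points divide
the geodesic.  (The lifts at spherical distance `< π/2` are used.) -/
def IsDSG1 (s t : ℝ) : Prop :=
  ∃ m : V3, K.IsDSG s t m ∧
    ∃ ε : ℝ, (ε = 1 ∨ ε = -1) ∧ K.SideAt s 1 m ε ∧
      K.SideAt t (posSign ⟪K.γ s, K.γ t⟫) m ε

/-- A double supporting geodesic of type 2: the two local arcs of `K` lie on opposite
sides of the shorter segment. -/
def IsDSG2 (s t : ℝ) : Prop :=
  ∃ m : V3, K.IsDSG s t m ∧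
    ∃ ε : ℝ, (ε = 1 ∨ ε = -1) ∧ K.SideAt s 1 m ε ∧
      K.SideAt t (posSign ⟪K.γ s, K.γ t⟫) m (-ε)

/-- `(s,t)` is an antipodal pair: `q = K.γ t` is the point `a_p` at distance `π/2` along
the tangent geodesic at `p = K.γ s`. -/
def IsAntipodal (s t : ℝ) : Prop :=
  K.Regular s ∧ projEq (K.γ t) (K.antipode s)

/-- An antipodal pair of type 1: the tangent geodesic `τ_q` lies in the region `R₁`
(of the two regions into which `τ_p` and the geodesic `Y_p` dual to `c_p` divide `ℝP²`)
containing the centre of curvature `c_p`. -/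
def IsAntipodal1 (s t : ℝ) : Prop :=
  K.IsAntipodal s t ∧ K.Regular t ∧
    ∀ x : V3, ‖x‖ = 1 → ⟪K.tangentPole t, x⟫ = 0 → ¬ projEq x (K.γ t) →
      0 < ⟪K.tangentPole s, x⟫ * ⟪K.center s, x⟫ * ⟪K.tangentPole s, K.center s⟫

/-- An antipodal pair of type 2: `τ_q` lies in the other region `R₂`. -/
def IsAntipodal2 (s t : ℝ) : Prop :=
  K.IsAntipodal s t ∧ K.Regular t ∧
    ∀ x : V3, ‖x‖ = 1 → ⟪K.tangentPole t, x⟫ = 0 → ¬ projEq x (K.γ t) →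
      ⟪K.tangentPole s, x⟫ * ⟪K.center s, x⟫ * ⟪K.tangentPole s, K.center s⟫ < 0

/-- `(s,t)` is a normal-tangent pair: the tangent geodesic at `q = K.γ t` is the normal
geodesic `ν_p` at `p = K.γ s`. -/
def IsNT (s t : ℝ) : Prop :=
  K.Regular s ∧ K.Regular t ∧ Parallel (K.vel s) (K.tangentPole t)

/-- A normal-tangent pair of type 1: `q` lies on `ν_p⁻`, the segment of `ν_p` from `c_p`
to `p` (equivalently, the lift of `q` on the `normalDir` side of `p` lies beyond `c_p`). -/
def IsNT1 (s t : ℝ) : Prop :=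
  K.IsNT s t ∧
    ⟪posSign ⟪K.γ t, K.normalDir s⟫ • K.γ t, K.γ s⟫ < ⟪K.center s, K.γ s⟫

/-- A normal-tangent pair of type 2: `q` lies on `ν_p⁺`, the segment from `p` to `c_p`. -/
def IsNT2 (s t : ℝ) : Prop :=
  K.IsNT s t ∧
    ⟪K.center s, K.γ s⟫ < ⟪posSign ⟪K.γ t, K.normalDir s⟫ • K.γ t, K.γ s⟫

/-! ### The counts occurring in the formulas -/

/-- `C₁`: number of crossings of type 1. -/
def C1 : ℕ :=
  Nat.card {p : ℝ × ℝ // p.1 ∈ Dom ∧ p.2 ∈ Dom ∧ p.1 < p.2 ∧ K.IsCrossing1 p.1 p.2}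

/-- `C₂`: number of crossings of type 2. -/
def C2 : ℕ :=
  Nat.card {p : ℝ × ℝ // p.1 ∈ Dom ∧ p.2 ∈ Dom ∧ p.1 < p.2 ∧ K.IsCrossing2 p.1 p.2}

/-- `T₁`: number of double supporting geodesics of type 1. -/
def T1 : ℕ :=
  Nat.card {p : ℝ × ℝ // p.1 ∈ Dom ∧ p.2 ∈ Dom ∧ p.1 < p.2 ∧ K.IsDSG1 p.1 p.2}

/-- `T₂`: number of double supporting geodesics of type 2. -/
def T2 : ℕ :=
  Nat.card {p : ℝ × ℝ // p.1 ∈ Dom ∧ p.2 ∈ Dom ∧ p.1 < p.2 ∧ K.IsDSG2 p.1 p.2}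

/-- `I`: number of inflection points. -/
def Icnt : ℕ := Nat.card {t : ℝ // t ∈ Dom ∧ K.IsInflection t}

/-- `U`: number of cusps. -/
def U : ℕ := Nat.card {t : ℝ // t ∈ Dom ∧ K.IsCusp t}

/-- `A₁`: number of (ordered) antipodal pairs of type 1. -/
def A1 : ℕ :=
  Nat.card {p : ℝ × ℝ // p.1 ∈ Dom ∧ p.2 ∈ Dom ∧ K.IsAntipodal1 p.1 p.2}

/-- `A₂`: number of (ordered) antipodal pairs of type 2. -/
def A2 : ℕ :=
  Nat.card {p : ℝ × ℝ // p.1 ∈ Dom ∧ p.2 ∈ Dom ∧ K.IsAntipodal2 p.1 p.2}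

/-- `N₁`: number of (ordered) normal-tangent pairs of type 1. -/
def N1 : ℕ :=
  Nat.card {p : ℝ × ℝ // p.1 ∈ Dom ∧ p.2 ∈ Dom ∧ K.IsNT1 p.1 p.2}

/-- `N₂`: number of (ordered) normal-tangent pairs of type 2. -/
def N2 : ℕ :=
  Nat.card {p : ℝ × ℝ // p.1 ∈ Dom ∧ p.2 ∈ Dom ∧ K.IsNT2 p.1 p.2}

/-! ### Genericity -/

/-- The genericity conditions of the paper. -/
structure IsGeneric (K : RPCurve) : Prop where
  /-- finitely many crossings -/
  finite_cross : {p : ℝ × ℝ | p.1 ∈ Dom ∧ p.2 ∈ Dom ∧ K.IsCrossing p.1 p.2}.Finite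
  /-- finitely many double supporting geodesics -/
  finite_dsg : {p : ℝ × ℝ | p.1 ∈ Dom ∧ p.2 ∈ Dom ∧ ∃ m, K.IsDSG p.1 p.2 m}.Finite
  /-- finitely many cusps -/
  finite_cusp : {t | t ∈ Dom ∧ K.IsCusp t}.Finite
  /-- finitely many inflection points -/
  finite_infl : {t | t ∈ Dom ∧ K.IsInflection t}.Finite
  /-- finitely many antipodal pairs -/
  finite_anti : {p : ℝ × ℝ | p.1 ∈ Dom ∧ p.2 ∈ Dom ∧ K.IsAntipodal p.1 p.2}.Finite
  /-- finitely many normal-tangent pairs -/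
  finite_nt : {p : ℝ × ℝ | p.1 ∈ Dom ∧ p.2 ∈ Dom ∧ K.IsNT p.1 p.2}.Finite
  /-- tangent geodesics at self-intersections are neither parallel (equal) nor
  perpendicular -/
  cross_transverse : ∀ s t, K.IsCrossing s t →
    ¬ Parallel (K.tangentPole s) (K.tangentPole t) ∧
      ⟪K.tangentPole s, K.tangentPole t⟫ ≠ 0
  /-- the tangent geodesic through an inflection point or at a cusp is everywhere else
  transverse to `K` -/
  infl_cusp_tangent_transverse : ∀ t, (K.IsInflection t ∨ K.IsCusp t) →
    ∀ u, K.Regular u → ¬ projEq (K.γ u) (K.γ t) → ⟪K.suppPole t, K.γ u⟫ = 0 →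
      ¬ Parallel (K.suppPole t) (K.tangentPole u)
  /-- a geodesic goes through at most two tangent points or cusps of `K` -/
  at_most_two_supports : ∀ m : V3, m ≠ 0 → ∀ t₁ t₂ t₃,
    t₁ ∈ Dom → t₂ ∈ Dom → t₃ ∈ Dom →
    K.Touches t₁ m → K.Touches t₂ m → K.Touches t₃ m →
      projEq (K.γ t₁) (K.γ t₂) ∨ projEq (K.γ t₁) (K.γ t₃) ∨ projEq (K.γ t₂) (K.γ t₃)
  /-- no crossings occur at inflection points -/
  no_cross_at_infl : ∀ s t, K.IsCrossing s t → ¬ K.IsInflection s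
  /-- a geodesic normal to `K` at one point is tangent to `K` at at most one point ... -/
  normal_tangent_unique : ∀ s, K.Regular s →
    Set.Subsingleton {t | t ∈ Dom ∧ K.IsNT s t}
  /-- ... and everywhere else transverse to `K` -/
  normal_transverse : ∀ s t, K.IsNT s t → ∀ u, K.Regular u →
    ¬ projEq (K.γ u) (K.γ t) → ⟪K.vel s, K.γ u⟫ = 0 →
      ¬ Parallel (K.vel s) (K.tangentPole u)
  /-- the distance between the two points on a double-supporting geodesic is not `π/2` -/
  dsg_not_quarter : ∀ s t m, K.IsDSG s t m → ⟪K.γ s, K.γ t⟫ ≠ 0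
  /-- for an antipodal pair `(p,q)`, the tangent geodesic `τ_q` is neither `τ_p` nor the
  geodesic `Y_p` dual to `c_p` -/
  anti_nondeg : ∀ s t, K.IsAntipodal s t → K.Regular t →
    ¬ Parallel (K.tangentPole t) (K.tangentPole s) ∧
      ¬ Parallel (K.tangentPole t) (K.center s)
  /-- for a normal-tangent pair `(p,q)`, `q` is not `c_p` -/
  nt_not_center : ∀ s t, K.IsNT s t → ¬ projEq (K.γ t) (K.center s)
  /-- all self-intersections are double points -/
  at_most_double : ∀ t₁ t₂ t₃, t₁ ∈ Dom → t₂ ∈ Dom → t₃ ∈ Dom →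
    t₁ ≠ t₂ → t₁ ≠ t₃ → t₂ ≠ t₃ →
    projEq (K.γ t₁) (K.γ t₂) → ¬ projEq (K.γ t₁) (K.γ t₃)

end RPCurve

/-- `K'` is the dual curve of `K`: the point of `K'` at the parameter `t` is the point of
`ℝP²` dual to the tangent geodesic of `K` at `t` (equivalently, the point at distance
`π/2` along the normal geodesic `ν_p`). -/
def IsDualCurve (K K' : RPCurve) : Prop :=
  ∀ t, K.Regular t → ∃ c : ℝ, c ≠ 0 ∧ K'.γ t = c • K.tangentPole t

namespace RPCurve

variable (K : RPCurve)

/-! ### The function `M_p` of Theorem 1 -/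

/-- `M_p⁺`: the number of intersections of `K` with the open tangent segment `τ_p⁺`
from `p` to `a_p`. -/
def Mplus (t : ℝ) : ℕ :=
  Nat.card {s : ℝ // s ∈ Dom ∧ ∃ u ∈ Ioo 0 (π / 2),
    projEq (K.γ s) (Real.cos u • K.γ t + Real.sin u • K.unitTangent t)}

/-- `M_p⁻`: the number of intersections of `K` with the open tangent segment `τ_p⁻`
from `a_p` back to `p`. -/
def Mminus (t : ℝ) : ℕ :=
  Nat.card {s : ℝ // s ∈ Dom ∧ ∃ u ∈ Ioo (π / 2) π,
    projEq (K.γ s) (Real.cos u • K.γ t + Real.sin u • K.unitTangent t)}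

/-- `M_p = M_p⁺ - M_p⁻`. -/
def Mval (t : ℝ) : ℤ := (K.Mplus t : ℤ) - (K.Mminus t : ℤ)

/-! ### The tangent-normal frame and the function `V_p` -/

/-- The white region of the tangent-normal frame `F_p`: thinking of `τ_p` and `ν_p` as the
`x`- and `y`-axes, the region of `ℝP²` corresponding to the quadrants where `x` and `y`
have the same sign. -/
def White (t : ℝ) : Set V3 :=
  {x | 0 < ⟪K.unitTangent t, x⟫ * ⟪K.normalDir t, x⟫}

/-- The black region of the tangent-normal frame `F_p`. -/
def Black (t : ℝ) : Set V3 :=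
  {x | ⟪K.unitTangent t, x⟫ * ⟪K.normalDir t, x⟫ < 0}

/-- `W_p`: the number of geodesics through `p` tangent to `K` lying in the white region of
the tangent-normal frame at `p` (counted by their tangency parameters). -/
def Wcount (t : ℝ) : ℕ :=
  Nat.card {u : ℝ // u ∈ Dom ∧ K.Regular u ∧ ⟪K.tangentPole u, K.γ t⟫ = 0 ∧
    ∀ x : V3, ‖x‖ = 1 → ⟪K.tangentPole u, x⟫ = 0 → ¬ projEq x (K.γ t) → x ∈ K.White t}

/-- `B_p`: likewise for the black region. -/
def Bcount (t : ℝ) : ℕ :=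
  Nat.card {u : ℝ // u ∈ Dom ∧ K.Regular u ∧ ⟪K.tangentPole u, K.γ t⟫ = 0 ∧
    ∀ x : V3, ‖x‖ = 1 → ⟪K.tangentPole u, x⟫ = 0 → ¬ projEq x (K.γ t) → x ∈ K.Black t}

/-- `V_p = W_p - B_p`. -/
def Vval (t : ℝ) : ℤ := (K.Wcount t : ℤ) - (K.Bcount t : ℤ)

/-! ### The augmented curve `K̄`: `K` together with its inflection geodesics -/

/-- Sign of the derivative of the geodesic curvature at an inflection. -/
def inflSign (i : ℝ) : ℝ := posSign (deriv K.curv i)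

/-- Pole of the inflection geodesic (the tangent geodesic) at the inflection `i`. -/
def inflPole (i : ℝ) : V3 := cross (K.γ i) (K.unitTangent i)

/-- Parametrisation of the inflection geodesic at the inflection `i`. -/
def inflPt (i u : ℝ) : V3 := Real.cos u • K.γ i + Real.sin u • K.unitTangent i

/-- Forward tangent direction of the inflection geodesic. -/
def inflDir (i u : ℝ) : V3 := -Real.sin u • K.γ i + Real.cos u • K.unitTangent i

/-- The normal direction with which each point of `τ_p - p` of an inflection geodesic is
endowed (the convention of the paper): near the inflection point it points to the side
towards which `K` curves on the corresponding side of `p`, and it flips at `p` and at the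
point of `τ_p` antipodal to `p`.  The point at distance `π/2` from `inflPt i u` in this
direction is the point `p'` dual to `τ_p`, which is the centre of curvature of every
point of the inflection geodesic. -/
def inflNrm (i u : ℝ) : V3 :=
  ((if u < π / 2 then (1 : ℝ) else -1) * K.inflSign i) • K.inflPole i

end RPCurve

/-- Indexing of the points of the augmented curve `K̄`: a point of `K` (parameter `t`), or
the point of the inflection geodesic at the inflection `i` with angle-parameter `u`. -/
abbrev BarIdx := ℝ ⊕ ℝ × ℝ

/-- `barLt`: a linear-order style relation on `BarIdx` used to count unordered pairs. -/
def barLt : BarIdx → BarIdx → Prop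
  | Sum.inl s, Sum.inl t => s < t
  | Sum.inl _, Sum.inr _ => True
  | Sum.inr _, Sum.inl _ => False
  | Sum.inr p, Sum.inr q => p.1 < q.1 ∨ (p.1 = q.1 ∧ p.2 < q.2)

namespace RPCurve

variable (K : RPCurve)

/-- The domain of `K̄`: parameters of `K`, together with one copy of `(0, π)` for each
inflection point of `K` (the inflection geodesic minus the inflection point, traversed
once in `ℝP²`). -/
def barDom : Set BarIdx :=
  (Sum.inl '' Dom) ∪
    (Sum.inr '' {p : ℝ × ℝ | p.1 ∈ Dom ∧ K.IsInflection p.1 ∧ p.2 ∈ Ioo 0 π})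

/-- The point of `K̄` at a bar-index. -/
def barPt : BarIdx → V3
  | Sum.inl t => K.γ t
  | Sum.inr (i, u) => K.inflPt i u

/-- The pole of the tangent geodesic of `K̄` at a bar-index (for a point of an inflection
geodesic, the tangent geodesic is the geodesic itself). -/
def barPole : BarIdx → V3
  | Sum.inl t => K.tangentPole t
  | Sum.inr (i, _) => K.inflPole i

/-- Regularity at a bar-index. -/
def barRegular : BarIdx → Prop
  | Sum.inl t => K.Regular t
  | Sum.inr _ => True

/-- The pole of the normal geodesic `ν_α` of `K̄` at a bar-index (for a point `α` of an
inflection geodesic `τ_p`, `ν_α` is the geodesic through `α` and the dual point `p'`). -/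
def barNuPole : BarIdx → V3
  | Sum.inl t => K.vel t
  | Sum.inr (i, u) => cross (K.inflPt i u) (K.inflNrm i u)

/-- The unit normal direction (towards the centre of curvature) at a bar-index. -/
def barE : BarIdx → V3
  | Sum.inl t => K.normalDir t
  | Sum.inr (i, u) => K.inflNrm i u

/-- Cosine of the distance from the point to its centre of curvature (for a point of an
inflection geodesic the centre of curvature is at distance exactly `π/2`). -/
def barCos : BarIdx → ℝ
  | Sum.inl t => ⟪K.center t, K.γ t⟫
  | Sum.inr _ => 0

/-- A crossing of the augmented curve `K̄` (inflection points of `K` are *not* counted as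
crossings: the parameter `u = 0` is excluded from the domain of inflection geodesics). -/
def IsBarCrossing (a b : BarIdx) : Prop :=
  a ≠ b ∧ K.barRegular a ∧ K.barRegular b ∧ projEq (K.barPt a) (K.barPt b)

/-- Lift sign matching the branch at `b` with the point `K.barPt a`. -/
def barLift (a b : BarIdx) : ℝ := if K.barPt b = K.barPt a then 1 else -1

/-- The local arc of `K̄` at `a` (lift `σ`, forward iff `dir`) lies in the sector with
sign `ε₁` for the pole `mself` of the branch through `a` and sign `ε₂` for the pole
`mother` of the other branch.  For an arc of an inflection geodesic, the geodesic is
construed as bending slightly towards its normal direction. -/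
def barArcIn (a : BarIdx) (σ : ℝ) (dir : Bool) (mself mother : V3) (ε₁ ε₂ : ℝ) : Prop :=
  match a with
  | Sum.inl s => K.ArcIn s σ dir (sector mself mother ε₁ ε₂)
  | Sum.inr (i, u) =>
      0 < ε₁ * ⟪mself, σ • K.inflNrm i u⟫ ∧
      0 < ε₂ * ⟪mother, ((if dir then (1 : ℝ) else -1) * σ) • K.inflDir i u⟫

/-- The four local arcs of `K̄` at a crossing `(a, b)`, as sector-membership predicates. -/
def barCrossArcIn (a b : BarIdx) (k : Fin 4) (η₁ η₂ : ℝ) : Prop :=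
  if k = 0 then K.barArcIn a 1 false (K.barPole a) (K.barPole b) η₁ η₂
  else if k = 1 then K.barArcIn a 1 true (K.barPole a) (K.barPole b) η₁ η₂
  else if k = 2 then K.barArcIn b (K.barLift a b) false (K.barPole b) (K.barPole a) η₂ η₁
  else K.barArcIn b (K.barLift a b) true (K.barPole b) (K.barPole a) η₂ η₁

/-- A crossing of `K̄` of type 1. -/
def IsBarCrossing1 (a b : BarIdx) : Prop :=
  K.IsBarCrossing a b ∧
    ∃ ε₁ ε₂ : ℝ, (ε₁ = 1 ∨ ε₁ = -1) ∧ (ε₂ = 1 ∨ ε₂ = -1) ∧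
      ε₁ * ε₂ * ⟪K.barPole a, K.barPole b⟫ < 0 ∧
      ∃ i j : Fin 4, i ≠ j ∧
        K.barCrossArcIn a b i ε₁ ε₂ ∧ K.barCrossArcIn a b j (-ε₁) (-ε₂)

/-- A crossing of `K̄` of type 2. -/
def IsBarCrossing2 (a b : BarIdx) : Prop :=
  K.IsBarCrossing a b ∧
    ∃ ε₁ ε₂ : ℝ, (ε₁ = 1 ∨ ε₁ = -1) ∧ (ε₂ = 1 ∨ ε₂ = -1) ∧
      ε₁ * ε₂ * ⟪K.barPole a, K.barPole b⟫ < 0 ∧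
      ∃ i j : Fin 4, i ≠ j ∧
        K.barCrossArcIn a b i ε₁ ε₂ ∧ K.barCrossArcIn a b j ε₁ ε₂

/-- A normal-tangent pair of `K̄`. -/
def IsBarNT (a b : BarIdx) : Prop :=
  K.barRegular a ∧ K.barRegular b ∧ Parallel (K.barNuPole a) (K.barPole b)

/-- A normal-tangent pair of `K̄` of type 1 (`q` on `ν_α⁻`). -/
def IsBarNT1 (a b : BarIdx) : Prop :=
  K.IsBarNT a b ∧
    ⟪posSign ⟪K.barPt b, K.barE a⟫ • K.barPt b, K.barPt a⟫ < K.barCos a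

/-- A normal-tangent pair of `K̄` of type 2 (`q` on `ν_α⁺`). -/
def IsBarNT2 (a b : BarIdx) : Prop :=
  K.IsBarNT a b ∧
    K.barCos a < ⟪posSign ⟪K.barPt b, K.barE a⟫ • K.barPt b, K.barPt a⟫

/-- `C₁` for the augmented curve `K̄`. -/
def C1bar : ℕ :=
  Nat.card {p : BarIdx × BarIdx //
    p.1 ∈ K.barDom ∧ p.2 ∈ K.barDom ∧ barLt p.1 p.2 ∧ K.IsBarCrossing1 p.1 p.2}

/-- `C₂` for the augmented curve `K̄`. -/
def C2bar : ℕ :=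
  Nat.card {p : BarIdx × BarIdx //
    p.1 ∈ K.barDom ∧ p.2 ∈ K.barDom ∧ barLt p.1 p.2 ∧ K.IsBarCrossing2 p.1 p.2}

/-- `N₁` for the augmented curve `K̄` (ordered pairs). -/
def N1bar : ℕ :=
  Nat.card {p : BarIdx × BarIdx //
    p.1 ∈ K.barDom ∧ p.2 ∈ K.barDom ∧ K.IsBarNT1 p.1 p.2}

/-- `N₂` for the augmented curve `K̄` (ordered pairs). -/
def N2bar : ℕ :=
  Nat.card {p : BarIdx × BarIdx //
    p.1 ∈ K.barDom ∧ p.2 ∈ K.barDom ∧ K.IsBarNT2 p.1 p.2}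

end RPCurve

/-! ### Auxiliary lemmas for the proof -/

set_option linter.unusedTactic false
set_option linter.unreachableTactic false

section AuxCross

private lemma crossE (x y : V3) (i : Fin 3) :
    cross x y i = ![x 1 * y 2 - x 2 * y 1, x 2 * y 0 - x 0 * y 2, x 0 * y 1 - x 1 * y 0] i := by
  simp [cross]

private lemma inner_cross_left (x y : V3) : ⟪cross x y, x⟫ = 0 := by
  simp [PiLp.inner_apply, Fin.sum_univ_three, crossE]; ring

private lemma inner_cross_right (x y : V3) : ⟪cross x y, y⟫ = 0 := by
  simp [PiLp.inner_apply, Fin.sum_univ_three, crossE]; ring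

private lemma cross_self_inner (x y : V3) :
    ⟪cross x y, cross x y⟫ = ⟪x, x⟫ * ⟪y, y⟫ - ⟪x, y⟫ ^ 2 := by
  simp [PiLp.inner_apply, Fin.sum_univ_three, crossE, -inner_self_eq_norm_sq_to_K]; ring

/-- The key algebraic identity (a Lagrange-type identity in 3-space). -/
private lemma cross_key (m x y z : V3) :
    ⟪m, z⟫ * (⟪x, x⟫ * ⟪y, y⟫ - ⟪x, y⟫ ^ 2) =
      ⟪m, x⟫ * (⟪x, z⟫ * ⟪y, y⟫ - ⟪y, z⟫ * ⟪x, y⟫) +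
      ⟪m, y⟫ * (⟪y, z⟫ * ⟪x, x⟫ - ⟪x, z⟫ * ⟪x, y⟫) +
      ⟪m, cross x y⟫ * ⟪z, cross x y⟫ := by
  simp [PiLp.inner_apply, Fin.sum_univ_three, crossE, -inner_self_eq_norm_sq_to_K]; ring

private lemma cross_zero_right (x : V3) : cross x 0 = 0 := by
  ext i; fin_cases i <;> simp [crossE]

private lemma cross_smul_right (c : ℝ) (x y : V3) : cross x (c • y) = c • cross x y := by
  ext i; fin_cases i <;> simp [crossE] <;> ring

private lemma cross_neg_right (x y : V3) : cross x (-y) = -cross x y := by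
  ext i; fin_cases i <;> simp [crossE] <;> ring

private lemma cross_neg_neg (x y : V3) : cross (-x) (-y) = cross x y := by
  ext i; fin_cases i <;> simp [crossE] <;> ring

private lemma hasDerivAt_cross {f g : ℝ → V3} {f' g' : V3} {u : ℝ}
    (hf : HasDerivAt f f' u) (hg : HasDerivAt g g' u) :
    HasDerivAt (fun x => cross (f x) (g x)) (cross f' (g u) + cross (f u) g') u := by
  have hc : ∀ i : Fin 3, HasDerivAt (fun x => f x i) (f' i) u := by
    intro i; exact (EuclideanSpace.proj i).hasFDerivAt.comp_hasDerivAt u hf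
  have hd : ∀ i : Fin 3, HasDerivAt (fun x => g x i) (g' i) u := by
    intro i; exact (EuclideanSpace.proj i).hasFDerivAt.comp_hasDerivAt u hg
  have h : HasDerivAt
      (fun x => (![f x 1 * g x 2 - f x 2 * g x 1, f x 2 * g x 0 - f x 0 * g x 2,
        f x 0 * g x 1 - f x 1 * g x 0] : Fin 3 → ℝ))
      ![f' 1 * g u 2 + f u 1 * g' 2 - (f' 2 * g u 1 + f u 2 * g' 1),
        f' 2 * g u 0 + f u 2 * g' 0 - (f' 0 * g u 2 + f u 0 * g' 2),
        f' 0 * g u 1 + f u 0 * g' 1 - (f' 1 * g u 0 + f u 1 * g' 0)] u := by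
    rw [hasDerivAt_pi]
    intro i
    fin_cases i
    · simpa using ((hc 1).fun_mul (hd 2)).fun_sub ((hc 2).fun_mul (hd 1))
    · simpa using ((hc 2).fun_mul (hd 0)).fun_sub ((hc 0).fun_mul (hd 2))
    · simpa using ((hc 0).fun_mul (hd 1)).fun_sub ((hc 1).fun_mul (hd 0))
  have h2 := (EuclideanSpace.equiv (Fin 3) ℝ).symm.hasFDerivAt.comp_hasDerivAt u h
  refine (h2.congr_deriv ?_ :)
  ext i; fin_cases i <;> simp [crossE] <;> ring

private lemma continuous_cross : Continuous (fun p : V3 × V3 => cross p.1 p.2) := by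
  have hc : ∀ i : Fin 3, Continuous (fun v : V3 => v i) :=
    fun i => (EuclideanSpace.proj (𝕜 := ℝ) i).continuous
  apply (EuclideanSpace.equiv (Fin 3) ℝ).symm.continuous.comp
  refine continuous_pi fun i => ?_
  fin_cases i <;>
    simp only [Matrix.cons_val_zero, Matrix.cons_val_one, Matrix.head_cons] <;>
    exact (((hc _).comp continuous_fst).mul ((hc _).comp continuous_snd)).sub
      (((hc _).comp continuous_fst).mul ((hc _).comp continuous_snd))

end AuxCross
section AuxCurve

namespace RPCurve

variable (K : RPCurve)

private lemma hasDerivAt_γ (u : ℝ) : HasDerivAt K.γ (K.vel u) u :=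
  (K.smooth.differentiable (by simp) u).hasDerivAt

private lemma contDiff_vel : ContDiff ℝ (⊤ : ℕ∞) K.vel :=
  (contDiff_infty_iff_deriv.mp K.smooth).2

private lemma hasDerivAt_vel (u : ℝ) : HasDerivAt K.vel (K.acc u) u :=
  ((K.contDiff_vel.differentiable (by simp)) u).hasDerivAt

private lemma continuous_γ : Continuous K.γ := K.smooth.continuous

private lemma continuous_vel : Continuous K.vel := K.contDiff_vel.continuous

private lemma continuous_acc : Continuous K.acc :=
  (contDiff_infty_iff_deriv.mp K.contDiff_vel).2.continuous

private lemma inner_self (u : ℝ) : ⟪K.γ u, K.γ u⟫ = 1 := by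
  have := K.unit u
  rw [real_inner_self_eq_norm_sq, this]; norm_num

private lemma inner_γ_vel (u : ℝ) : ⟪K.γ u, K.vel u⟫ = 0 := by
  have h1 : HasDerivAt (fun x => ⟪K.γ x, K.γ x⟫) (⟪K.γ u, K.vel u⟫ + ⟪K.vel u, K.γ u⟫) u :=
    (K.hasDerivAt_γ u).inner ℝ (K.hasDerivAt_γ u)
  have h2 : HasDerivAt (fun x : ℝ => (1 : ℝ)) 0 u := hasDerivAt_const u 1
  have h3 : (fun x => ⟪K.γ x, K.γ x⟫) = fun _ : ℝ => (1 : ℝ) := funext fun x => K.inner_self x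
  rw [h3] at h1
  have h4 := h1.unique h2
  have h5 := real_inner_comm (K.γ u) (K.vel u)
  linarith

private lemma inner_γ_acc (u : ℝ) : ⟪K.γ u, K.acc u⟫ = -⟪K.vel u, K.vel u⟫ := by
  have h1 : HasDerivAt (fun x => ⟪K.γ x, K.vel x⟫)
      (⟪K.γ u, K.acc u⟫ + ⟪K.vel u, K.vel u⟫) u :=
    (K.hasDerivAt_γ u).inner ℝ (K.hasDerivAt_vel u)
  have h3 : (fun x => ⟪K.γ x, K.vel x⟫) = fun _ : ℝ => (0 : ℝ) := funext fun x => K.inner_γ_vel x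
  rw [h3] at h1
  have := h1.unique (hasDerivAt_const u 0)
  linarith

end RPCurve

end AuxCurve
section AuxSign

private lemma sgn_bc {a b c : ℝ} (h1 : a * b < 0) (h2 : a * c < 0) : 0 < b * c := by
  rcases lt_trichotomy a 0 with ha | ha | ha
  · have hb : 0 < b := by nlinarith
    have hc : 0 < c := by nlinarith
    exact mul_pos hb hc
  · simp [ha] at h1
  · have hb : b < 0 := by nlinarith
    have hc : c < 0 := by nlinarith
    exact mul_pos_of_neg_of_neg hb hc

private lemma sgn_ac_neg {a b c : ℝ} (h1 : a * b < 0) (h2 : 0 < b * c) : a * c < 0 := by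
  rcases lt_trichotomy b 0 with hb | hb | hb
  · have ha : 0 < a := by nlinarith
    have hc : c < 0 := by nlinarith
    nlinarith
  · simp [hb] at h1
  · have ha : a < 0 := by nlinarith
    have hc : 0 < c := by nlinarith
    nlinarith

private lemma sgn_ac_pos {a b c : ℝ} (h1 : 0 < a * b) (h2 : 0 < b * c) : 0 < a * c := by
  rcases lt_trichotomy b 0 with hb | hb | hb
  · have ha : a < 0 := by nlinarith
    have hc : c < 0 := by nlinarith
    exact mul_pos_of_neg_of_neg ha hc
  · simp [hb] at h1
  · have ha : 0 < a := by nlinarith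
    have hc : 0 < c := by nlinarith
    exact mul_pos ha hc

private lemma posSign_eq_of_mul_pos {a b : ℝ} (h : 0 < a * b) : posSign a = posSign b := by
  unfold posSign
  split_ifs with h1 h2 h2
  · rfl
  · nlinarith
  · nlinarith
  · rfl

private lemma inner_self_pos' {x : V3} (h : x ≠ 0) : 0 < ⟪x, x⟫ := by
  have h1 : 0 < ‖x‖ := norm_pos_iff.mpr h
  rw [real_inner_self_eq_norm_sq]; positivity

private lemma posSign_div_pos {a c : ℝ} (hc : 0 < c) : posSign (a / c) = posSign a := by
  have hiff : 0 ≤ a / c ↔ 0 ≤ a := by rw [le_div_iff₀ hc]; simp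
  unfold posSign
  split_ifs with h1 h2 h2
  · rfl
  · exact absurd (hiff.mp h1) h2
  · exact absurd (hiff.mpr h2) h1
  · rfl

private lemma eventually_punct {t : ℝ} {P : ℝ → Prop} (h : ∀ᶠ u in 𝓝[≠] t, P u) :
    ∃ δ > 0, ∀ u, u ≠ t → |u - t| < δ → P u := by
  rw [eventually_nhdsWithin_iff, Metric.eventually_nhds_iff] at h
  obtain ⟨ε, hε, hp⟩ := h
  refine ⟨ε, hε, fun u hu hd => hp ?_ ?_⟩
  · rwa [Real.dist_eq]
  · simpa using hu

private lemma slope_sign {φ : ℝ → ℝ} {t d : ℝ} (h : HasDerivAt φ d t) (h0 : φ t = 0)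
    (hd : 0 < d) : ∀ᶠ u in 𝓝[≠] t, 0 < (u - t) * φ u := by
  have hs := hasDerivAt_iff_tendsto_slope.mp h
  filter_upwards [hs.eventually (eventually_gt_nhds hd), self_mem_nhdsWithin] with u hu hne
  have hne' : u ≠ t := by simpa using hne
  rw [slope_def_module, h0, sub_zero, smul_eq_mul] at hu
  have h1 : u - t ≠ 0 := sub_ne_zero.mpr hne'
  have h2 : (u - t) * φ u = ((u - t) * (u - t)) * ((u - t)⁻¹ * φ u) := by
    field_simp
  rw [h2]
  exact mul_pos (mul_self_pos.mpr h1) hu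

private lemma normalize_smul_pos {c : ℝ} (hc : 0 < c) (v : V3) :
    ‖c • v‖⁻¹ • (c • v) = ‖v‖⁻¹ • v := by
  rcases eq_or_ne v 0 with rfl | hv
  · simp
  · have h : (‖c‖ * ‖v‖)⁻¹ * c = ‖v‖⁻¹ := by
      rw [Real.norm_eq_abs, abs_of_pos hc]
      have : ‖v‖ ≠ 0 := norm_ne_zero_iff.mpr hv
      field_simp
    rw [norm_smul, smul_smul, h]

private lemma normalize_smul_neg {c : ℝ} (hc : c < 0) (v : V3) :
    ‖c • v‖⁻¹ • (c • v) = -(‖v‖⁻¹ • v) := by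
  rcases eq_or_ne v 0 with rfl | hv
  · simp
  · have h : (‖c‖ * ‖v‖)⁻¹ * c = -‖v‖⁻¹ := by
      have : ‖v‖ ≠ 0 := norm_ne_zero_iff.mpr hv
      rw [Real.norm_eq_abs, abs_of_neg hc]
      field_simp
      rw [div_self hc.ne]
    rw [norm_smul, smul_smul, h, neg_smul]

namespace RPCurve

variable (K : RPCurve) {t : ℝ}

private lemma tendsto_slope_vel (hvel : K.vel t = 0) :
    Tendsto (fun u => (u - t)⁻¹ • K.vel u) (𝓝[≠] t) (𝓝 (K.acc t)) := by
  have h := hasDerivAt_iff_tendsto_slope.mp (K.hasDerivAt_vel t)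
  apply h.congr
  intro u
  rw [slope_def_module, hvel, sub_zero]

private lemma tendsto_unitTangent_right (hvel : K.vel t = 0) (hA : K.acc t ≠ 0) :
    Tendsto K.unitTangent (𝓝[>] t) (𝓝 (‖K.acc t‖⁻¹ • K.acc t)) := by
  have hN : ContinuousAt (fun x : V3 => ‖x‖⁻¹ • x) (K.acc t) :=
    (continuousAt_id.norm.inv₀ (norm_ne_zero_iff.mpr hA)).smul continuousAt_id
  have hsub : (Ioi t : Set ℝ) ⊆ {t}ᶜ := fun u hu => by
    simp only [Set.mem_compl_iff, Set.mem_singleton_iff]; exact ne_of_gt hu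
  have h1 := hN.tendsto.comp ((K.tendsto_slope_vel hvel).mono_left (nhdsWithin_mono t hsub))
  apply h1.congr'
  filter_upwards [self_mem_nhdsWithin] with u hu
  have hc : 0 < (u - t)⁻¹ := inv_pos.mpr (by simpa [sub_pos] using hu)
  show (fun x : V3 => ‖x‖⁻¹ • x) ((u - t)⁻¹ • K.vel u) = K.unitTangent u
  simp only [unitTangent]
  exact normalize_smul_pos hc (K.vel u)

private lemma tendsto_unitTangent_left (hvel : K.vel t = 0) (hA : K.acc t ≠ 0) :
    Tendsto K.unitTangent (𝓝[<] t) (𝓝 (-(‖K.acc t‖⁻¹ • K.acc t))) := by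
  have hN : ContinuousAt (fun x : V3 => -(‖x‖⁻¹ • x)) (K.acc t) :=
    ((continuousAt_id.norm.inv₀ (norm_ne_zero_iff.mpr hA)).smul continuousAt_id).neg
  have hsub : (Iio t : Set ℝ) ⊆ {t}ᶜ := fun u hu => by
    simp only [Set.mem_compl_iff, Set.mem_singleton_iff]; exact ne_of_lt hu
  have h1 := hN.tendsto.comp ((K.tendsto_slope_vel hvel).mono_left (nhdsWithin_mono t hsub))
  apply h1.congr'
  filter_upwards [self_mem_nhdsWithin] with u hu
  have hc : (u - t)⁻¹ < 0 := inv_neg''.mpr (by simpa [sub_neg] using hu)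
  show -((fun x : V3 => ‖x‖⁻¹ • x) ((u - t)⁻¹ • K.vel u)) = K.unitTangent u
  simp only [unitTangent]
  rw [normalize_smul_neg hc (K.vel u), neg_neg]

private lemma eventually_regular (hvel : K.vel t = 0) (hA : K.acc t ≠ 0) :
    ∀ᶠ u in 𝓝[≠] t, K.vel u ≠ 0 := by
  filter_upwards [(K.tendsto_slope_vel hvel).eventually_ne hA] with u hu
  intro hv
  exact hu (by rw [hv, smul_zero])

private lemma inner_γt_acc (hvel : K.vel t = 0) : ⟪K.γ t, K.acc t⟫ = 0 := by
  rw [K.inner_γ_acc t, hvel]; simp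

private lemma cross_γ_acc_ne (hvel : K.vel t = 0) (hA : K.acc t ≠ 0) :
    cross (K.γ t) (K.acc t) ≠ 0 := by
  intro h
  have h1 := cross_self_inner (K.γ t) (K.acc t)
  rw [h, K.inner_self t, K.inner_γt_acc hvel] at h1
  have h2 : (0:ℝ) < ⟪K.acc t, K.acc t⟫ := inner_self_pos' hA
  rw [inner_zero_left] at h1
  nlinarith

private lemma eventually_mn (hvel : K.vel t = 0) (hA : K.acc t ≠ 0) :
    ∀ᶠ u in 𝓝[≠] t,
      0 < (u - t) * ⟪cross (K.γ t) (K.acc t), cross (K.γ u) (K.vel u)⟫ := by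
  set m := cross (K.γ t) (K.acc t) with hm
  have hd0 := hasDerivAt_cross (K.hasDerivAt_γ t) (K.hasDerivAt_vel t)
  rw [hvel, cross_zero_right, zero_add] at hd0
  have hd : HasDerivAt (fun u => ⟪m, cross (K.γ u) (K.vel u)⟫) (⟪m, m⟫ + ⟪0, cross (K.γ t) (K.vel t)⟫) t :=
    (hasDerivAt_const t m).inner ℝ hd0
  rw [inner_zero_left, add_zero] at hd
  have h0 : ⟪m, cross (K.γ t) (K.vel t)⟫ = (0 : ℝ) := by
    rw [hvel, cross_zero_right, inner_zero_right]
  have hmm : 0 < ⟪m, m⟫ := inner_self_pos' (K.cross_γ_acc_ne hvel hA)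
  exact slope_sign hd h0 hmm

end RPCurve

end AuxSign
section AuxCore

namespace RPCurve

variable (K : RPCurve)

/-- Derivative of the norm of the velocity at a regular point. -/
private lemma hasDerivAt_norm_vel {u : ℝ} (hreg : K.vel u ≠ 0) :
    HasDerivAt (fun x => ‖K.vel x‖) (⟪K.vel u, K.acc u⟫ / ‖K.vel u‖) u := by
  have hq : HasDerivAt (fun x => ⟪K.vel x, K.vel x⟫)
      (⟪K.vel u, K.acc u⟫ + ⟪K.acc u, K.vel u⟫) u :=
    (K.hasDerivAt_vel u).inner ℝ (K.hasDerivAt_vel u)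
  have hqpos : (0:ℝ) < ⟪K.vel u, K.vel u⟫ := inner_self_pos' hreg
  have hs := (Real.hasDerivAt_sqrt hqpos.ne').comp u hq
  have hfun : (fun x => Real.sqrt (⟪K.vel x, K.vel x⟫)) = fun x => ‖K.vel x‖ := by
    funext x
    rw [real_inner_self_eq_norm_sq, Real.sqrt_sq (norm_nonneg _)]
  rw [show (Real.sqrt ∘ fun x => ⟪K.vel x, K.vel x⟫) = fun x => Real.sqrt (⟪K.vel x, K.vel x⟫) from rfl,
    hfun] at hs
  refine hs.congr_deriv ?_
  rw [real_inner_self_eq_norm_sq, Real.sqrt_sq (norm_nonneg _),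
    real_inner_comm (K.acc u) (K.vel u)]
  have hn : ‖K.vel u‖ ≠ 0 := norm_ne_zero_iff.mpr hreg
  field_simp
  ring

private lemma hasDerivAt_G (m : V3) (c : ℝ) {u : ℝ} (hreg : K.vel u ≠ 0) :
    HasDerivAt (fun x => c * (⟪m, K.vel x⟫ / ‖K.vel x‖))
      (c * ((⟪m, K.acc u⟫ * ‖K.vel u‖ -
        ⟪m, K.vel u⟫ * (⟪K.vel u, K.acc u⟫ / ‖K.vel u‖)) / ‖K.vel u‖ ^ 2)) u := by
  have hf : HasDerivAt (fun x => ⟪m, K.vel x⟫) (⟪m, K.acc u⟫ + ⟪(0:V3), K.vel u⟫) u :=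
    (hasDerivAt_const u m).inner ℝ (K.hasDerivAt_vel u)
  rw [inner_zero_left, add_zero] at hf
  have hv := K.hasDerivAt_norm_vel hreg
  have hn : ‖K.vel u‖ ≠ 0 := norm_ne_zero_iff.mpr hreg
  exact (hf.div hv hn).const_mul c

private lemma G_deriv_pos (m : V3) (c : ℝ) {u : ℝ} (hreg : K.vel u ≠ 0)
    (hw : 0 < c * (⟪K.acc u, cross (K.γ u) (K.vel u)⟫ * ⟪m, cross (K.γ u) (K.vel u)⟫))
    (hh : c * ⟪m, K.γ u⟫ < 0) :
    0 < c * ((⟪m, K.acc u⟫ * ‖K.vel u‖ -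
      ⟪m, K.vel u⟫ * (⟪K.vel u, K.acc u⟫ / ‖K.vel u‖)) / ‖K.vel u‖ ^ 2) := by
  have hn : (0:ℝ) < ‖K.vel u‖ := norm_pos_iff.mpr hreg
  have hkey := cross_key m (K.γ u) (K.vel u) (K.acc u)
  rw [K.inner_self u, K.inner_γ_vel u] at hkey
  have hacc : ⟪K.γ u, K.acc u⟫ = -(‖K.vel u‖ ^ 2) := by
    rw [K.inner_γ_acc u, real_inner_self_eq_norm_sq]
  rw [hacc, real_inner_self_eq_norm_sq] at hkey
  have hnum : ⟪m, K.acc u⟫ * ‖K.vel u‖ ^ 2 - ⟪m, K.vel u⟫ * ⟪K.vel u, K.acc u⟫ =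
      ⟪K.acc u, cross (K.γ u) (K.vel u)⟫ * ⟪m, cross (K.γ u) (K.vel u)⟫ -
        ‖K.vel u‖ ^ 4 * ⟪m, K.γ u⟫ := by linear_combination hkey
  have hpos : 0 < c * (⟪m, K.acc u⟫ * ‖K.vel u‖ ^ 2 - ⟪m, K.vel u⟫ * ⟪K.vel u, K.acc u⟫) := by
    rw [hnum]
    have h4 := mul_pos (pow_pos hn 4) (neg_pos.mpr hh)
    nlinarith [hw, h4]
  have heq : c * ((⟪m, K.acc u⟫ * ‖K.vel u‖ -
      ⟪m, K.vel u⟫ * (⟪K.vel u, K.acc u⟫ / ‖K.vel u‖)) / ‖K.vel u‖ ^ 2) =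
      c * (⟪m, K.acc u⟫ * ‖K.vel u‖ ^ 2 - ⟪m, K.vel u⟫ * ⟪K.vel u, K.acc u⟫) / ‖K.vel u‖ ^ 3 := by
    field_simp
  rw [heq]
  positivity

private lemma hasDerivAt_H (m : V3) (c : ℝ) (u : ℝ) :
    HasDerivAt (fun x => c * ⟪m, K.γ x⟫) (c * ⟪m, K.vel u⟫) u := by
  have hf : HasDerivAt (fun x => ⟪m, K.γ x⟫) (⟪m, K.vel u⟫ + ⟪(0:V3), K.γ u⟫) u :=
    (hasDerivAt_const u m).inner ℝ (K.hasDerivAt_γ u)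
  rw [inner_zero_left, add_zero] at hf
  exact hf.const_mul c

/-- The core right-sided comparison lemma. -/
private lemma coreR (t : ℝ) (m : V3) (c δ : ℝ) (hδ : 0 < δ)
    (hmp : ⟪m, K.γ t⟫ = 0)
    (hlim : Tendsto (fun u => c * (⟪m, K.vel u⟫ / ‖K.vel u‖)) (𝓝[>] t) (𝓝 0))
    (hreg : ∀ u ∈ Ioo t (t + δ), K.vel u ≠ 0)
    (hw : ∀ u ∈ Ioo t (t + δ),
      0 < c * (⟪K.acc u, cross (K.γ u) (K.vel u)⟫ * ⟪m, cross (K.γ u) (K.vel u)⟫))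
    (hh : ∀ u ∈ Ioo t (t + δ), c * ⟪m, K.γ u⟫ < 0) : False := by
  have hGmono : StrictMonoOn (fun u => c * (⟪m, K.vel u⟫ / ‖K.vel u‖)) (Ioo t (t + δ)) := by
    apply strictMonoOn_of_deriv_pos (convex_Ioo t (t + δ))
    · exact fun u hu =>
        ((K.hasDerivAt_G m c (hreg u hu)).differentiableAt.continuousAt).continuousWithinAt
    · intro u hu
      rw [interior_Ioo] at hu
      rw [(K.hasDerivAt_G m c (hreg u hu)).deriv]
      exact K.G_deriv_pos m c (hreg u hu) (hw u hu) (hh u hu)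
  have hGnn : ∀ u ∈ Ioo t (t + δ), 0 ≤ c * (⟪m, K.vel u⟫ / ‖K.vel u‖) := by
    intro u hu
    refine le_of_tendsto hlim ?_
    filter_upwards [Ioo_mem_nhdsGT_of_mem (show t ∈ Ico t u from ⟨le_refl t, hu.1⟩)] with v hv
    exact (hGmono ⟨hv.1, hv.2.trans hu.2⟩ hu hv.2).le
  have hGpos : ∀ u ∈ Ioo t (t + δ), 0 < c * (⟪m, K.vel u⟫ / ‖K.vel u‖) := by
    intro u hu
    have hmid : (t + u) / 2 ∈ Ioo t u := ⟨by linarith [hu.1], by linarith [hu.1]⟩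
    have hmid' : (t + u) / 2 ∈ Ioo t (t + δ) := ⟨hmid.1, hmid.2.trans hu.2⟩
    have := hGmono hmid' hu hmid.2
    have h0 := hGnn _ hmid'
    simp only at this h0 ⊢
    linarith
  have hHmono : StrictMonoOn (fun u => c * ⟪m, K.γ u⟫) (Ico t (t + δ)) := by
    apply strictMonoOn_of_deriv_pos (convex_Ico t (t + δ))
    · exact fun u _ => ((K.hasDerivAt_H m c u).differentiableAt.continuousAt).continuousWithinAt
    · intro u hu
      rw [interior_Ico] at hu
      rw [(K.hasDerivAt_H m c u).deriv]
      have hn : (0:ℝ) < ‖K.vel u‖ := norm_pos_iff.mpr (hreg u hu)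
      have hg := hGpos u hu
      have heq : c * ⟪m, K.vel u⟫ = (c * (⟪m, K.vel u⟫ / ‖K.vel u‖)) * ‖K.vel u‖ := by
        field_simp
      rw [heq]
      exact mul_pos hg hn
  have hu0 : t + δ / 2 ∈ Ioo t (t + δ) := ⟨by linarith, by linarith⟩
  have h1 := hHmono (show t ∈ Ico t (t + δ) from ⟨le_refl t, by linarith⟩)
    (show t + δ / 2 ∈ Ico t (t + δ) from ⟨by linarith, by linarith⟩) (by linarith)
  have h3 := hh (t + δ / 2) hu0
  simp only [hmp, mul_zero] at h1
  linarith

/-- The core left-sided comparison lemma. -/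
private lemma coreL (t : ℝ) (m : V3) (c δ : ℝ) (hδ : 0 < δ)
    (hmp : ⟪m, K.γ t⟫ = 0)
    (hlim : Tendsto (fun u => c * (⟪m, K.vel u⟫ / ‖K.vel u‖)) (𝓝[<] t) (𝓝 0))
    (hreg : ∀ u ∈ Ioo (t - δ) t, K.vel u ≠ 0)
    (hw : ∀ u ∈ Ioo (t - δ) t,
      0 < c * (⟪K.acc u, cross (K.γ u) (K.vel u)⟫ * ⟪m, cross (K.γ u) (K.vel u)⟫))
    (hh : ∀ u ∈ Ioo (t - δ) t, c * ⟪m, K.γ u⟫ < 0) : False := by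
  have hGmono : StrictMonoOn (fun u => c * (⟪m, K.vel u⟫ / ‖K.vel u‖)) (Ioo (t - δ) t) := by
    apply strictMonoOn_of_deriv_pos (convex_Ioo (t - δ) t)
    · exact fun u hu =>
        ((K.hasDerivAt_G m c (hreg u hu)).differentiableAt.continuousAt).continuousWithinAt
    · intro u hu
      rw [interior_Ioo] at hu
      rw [(K.hasDerivAt_G m c (hreg u hu)).deriv]
      exact K.G_deriv_pos m c (hreg u hu) (hw u hu) (hh u hu)
  have hGnn : ∀ u ∈ Ioo (t - δ) t, c * (⟪m, K.vel u⟫ / ‖K.vel u‖) ≤ 0 := by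
    intro u hu
    refine ge_of_tendsto hlim ?_
    filter_upwards [Ioo_mem_nhdsLT_of_mem (show t ∈ Ioc u t from ⟨hu.2, le_refl t⟩)] with v hv
    exact (hGmono hu ⟨hu.1.trans hv.1, hv.2⟩ hv.1).le
  have hGneg : ∀ u ∈ Ioo (t - δ) t, c * (⟪m, K.vel u⟫ / ‖K.vel u‖) < 0 := by
    intro u hu
    have hmid : (u + t) / 2 ∈ Ioo u t := ⟨by linarith [hu.2], by linarith [hu.2]⟩
    have hmid' : (u + t) / 2 ∈ Ioo (t - δ) t := ⟨hu.1.trans hmid.1, hmid.2⟩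
    have := hGmono hu hmid' hmid.1
    have h0 := hGnn _ hmid'
    simp only at this h0 ⊢
    linarith
  have hHanti : StrictAntiOn (fun u => c * ⟪m, K.γ u⟫) (Ioc (t - δ) t) := by
    apply strictAntiOn_of_deriv_neg (convex_Ioc (t - δ) t)
    · exact fun u _ => ((K.hasDerivAt_H m c u).differentiableAt.continuousAt).continuousWithinAt
    · intro u hu
      rw [interior_Ioc] at hu
      rw [(K.hasDerivAt_H m c u).deriv]
      have hn : (0:ℝ) < ‖K.vel u‖ := norm_pos_iff.mpr (hreg u hu)
      have hg := hGneg u hu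
      have heq : c * ⟪m, K.vel u⟫ = (c * (⟪m, K.vel u⟫ / ‖K.vel u‖)) * ‖K.vel u‖ := by
        field_simp
      rw [heq]
      exact mul_neg_of_neg_of_pos hg hn
  have hu0 : t - δ / 2 ∈ Ioo (t - δ) t := ⟨by linarith, by linarith⟩
  have h1 := hHanti (show t - δ / 2 ∈ Ioc (t - δ) t from ⟨by linarith, by linarith⟩)
    (show t ∈ Ioc (t - δ) t from ⟨by linarith, le_refl t⟩) (by linarith)
  have h3 := hh (t - δ / 2) hu0
  simp only [hmp, mul_zero] at h1
  linarith

end RPCurve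

end AuxCore
section AuxInfl

private lemma sign_const {f : ℝ → ℝ} {a b : ℝ} (hf : ContinuousOn f (Ioo a b))
    (hne : ∀ u ∈ Ioo a b, f u ≠ 0) :
    ∀ u ∈ Ioo a b, ∀ v ∈ Ioo a b, 0 < f u * f v := by
  have key : ∀ u ∈ Ioo a b, ∀ v ∈ Ioo a b, u ≤ v → 0 < f u * f v := by
    intro u hu v hv huv
    have hsub : Icc u v ⊆ Ioo a b := fun z hz =>
      ⟨lt_of_lt_of_le hu.1 hz.1, lt_of_le_of_lt hz.2 hv.2⟩
    rcases lt_trichotomy (f u) 0 with h1 | h1 | h1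
    · rcases lt_trichotomy (f v) 0 with h2 | h2 | h2
      · exact mul_pos_of_neg_of_neg h1 h2
      · exact absurd h2 (hne v hv)
      · obtain ⟨z, hz, hz0⟩ := intermediate_value_Icc huv (hf.mono hsub) ⟨h1.le, h2.le⟩
        exact absurd hz0 (hne z (hsub hz))
    · exact absurd h1 (hne u hu)
    · rcases lt_trichotomy (f v) 0 with h2 | h2 | h2
      · obtain ⟨z, hz, hz0⟩ := intermediate_value_Icc' huv (hf.mono hsub) ⟨h2.le, h1.le⟩
        exact absurd hz0 (hne z (hsub hz))
      · exact absurd h2 (hne v hv)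
      · exact mul_pos h1 h2
  intro u hu v hv
  rcases le_total u v with h | h
  · exact key u hu v hv h
  · rw [mul_comm]
    exact key v hv u hu h

namespace RPCurve

variable (K : RPCurve)

private lemma closed_sign : ∃ ε : ℝ, (ε = 1 ∨ ε = -1) ∧ ∀ u, K.γ (u + 1) = ε • K.γ u := by
  rcases K.closed with h | h
  · exact ⟨1, Or.inl rfl, fun u => by rw [h u, one_smul]⟩
  · exact ⟨-1, Or.inr rfl, fun u => by rw [h u, neg_one_smul]⟩

private lemma vel_shift {ε : ℝ} (hγ : ∀ u, K.γ (u + 1) = ε • K.γ u) (u : ℝ) :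
    K.vel (u + 1) = ε • K.vel u := by
  have h1 : K.vel (u + 1) = deriv (fun x => K.γ (x + 1)) u := (deriv_comp_add_const K.γ 1 u).symm
  rw [h1, show (fun x => K.γ (x + 1)) = fun x => ε • K.γ x from funext hγ,
    ((K.smooth.differentiable (by simp) u).hasDerivAt.fun_const_smul ε).deriv]
  rfl

private lemma acc_shift {ε : ℝ} (hγ : ∀ u, K.γ (u + 1) = ε • K.γ u) (u : ℝ) :
    K.acc (u + 1) = ε • K.acc u := by
  have h1 : K.acc (u + 1) = deriv (fun x => K.vel (x + 1)) u := (deriv_comp_add_const K.vel 1 u).symm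
  rw [h1, show (fun x => K.vel (x + 1)) = fun x => ε • K.vel x from funext (K.vel_shift hγ),
    ((K.contDiff_vel.differentiable (by simp) u).hasDerivAt.fun_const_smul ε).deriv]
  rfl

private lemma unitTangent_shift {ε : ℝ} (hε : ε = 1 ∨ ε = -1)
    (hγ : ∀ u, K.γ (u + 1) = ε • K.γ u) (u : ℝ) :
    K.unitTangent (u + 1) = ε • K.unitTangent u := by
  rcases hε with rfl | rfl
  · simp [unitTangent, K.vel_shift hγ u]
  · have hv := K.vel_shift hγ u
    rw [neg_one_smul] at hv
    simp [unitTangent, hv, norm_neg]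

private lemma curv_shift {ε : ℝ} (hε : ε = 1 ∨ ε = -1)
    (hγ : ∀ u, K.γ (u + 1) = ε • K.γ u) (u : ℝ) :
    K.curv (u + 1) = ε * K.curv u := by
  have hv := K.vel_shift hγ u
  have ha := K.acc_shift hγ u
  have hg := hγ u
  have hu := K.unitTangent_shift hε hγ u
  rcases hε with rfl | rfl
  · rw [one_smul] at hv ha hg hu
    rw [curv, curv, hv, ha, hg, hu]
    ring
  · rw [neg_one_smul] at hv ha hg hu
    rw [curv, curv, hv, ha, hg, hu, cross_neg_neg, inner_neg_left, norm_neg]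
    ring

private lemma infl_shift {ε : ℝ} (hε : ε = 1 ∨ ε = -1)
    (hγ : ∀ u, K.γ (u + 1) = ε • K.γ u) (u : ℝ) :
    K.IsInflection (u + 1) ↔ K.IsInflection u := by
  have hεne : ε ≠ 0 := by rcases hε with rfl | rfl <;> norm_num
  have hreg : K.Regular (u + 1) ↔ K.Regular u := by
    unfold Regular
    rw [K.vel_shift hγ u]
    simp [smul_ne_zero_iff, hεne]
  have hcurv : K.curv (u + 1) = 0 ↔ K.curv u = 0 := by
    rw [K.curv_shift hε hγ u]
    simp [hεne]
  unfold IsInflection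
  rw [hreg, hcurv]

private lemma infl_shift_int {ε : ℝ} (hε : ε = 1 ∨ ε = -1)
    (hγ : ∀ u, K.γ (u + 1) = ε • K.γ u) :
    ∀ (k : ℤ) (u : ℝ), K.IsInflection (u + k) ↔ K.IsInflection u := by
  intro k
  induction k using Int.induction_on with
  | zero => simp
  | succ n ih =>
      intro u
      have h1 := K.infl_shift hε hγ (u + (n : ℝ))
      have h2 := ih u
      rw [show (u + ((n : ℤ) + 1 : ℤ) : ℝ) = (u + (n : ℝ)) + 1 by push_cast; ring]
      rw [show (u + ((n : ℤ) : ℝ)) = u + (n : ℝ) from by push_cast; ring] at h2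
      exact h1.trans h2
  | pred n ih =>
      intro u
      have h1 := K.infl_shift hε hγ (u + ((-(n : ℝ)) - 1))
      have h2 := ih u
      rw [show (u + ((-(n : ℤ) - 1 : ℤ)) : ℝ) = u + (-(n : ℝ) - 1) by push_cast; ring]
      rw [show (u + ((-(n : ℤ) : ℤ)) : ℝ) = u + (-(n : ℝ) - 1) + 1 by push_cast; ring] at h2
      exact h1.symm.trans h2

private lemma no_infl_near (hgen : K.IsGeneric) {t : ℝ} (ht : ¬ K.Regular t) :
    ∃ δ > 0, ∀ u, |u - t| < δ → ¬ K.IsInflection u := by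
  obtain ⟨ε, hε, hγ⟩ := K.closed_sign
  have hFfin : {u | u ∈ Ico (t - 2⁻¹) (t + 2⁻¹) ∧ K.IsInflection u}.Finite := by
    apply Set.Finite.of_finite_image (f := Int.fract)
    · apply hgen.finite_infl.subset
      rintro x ⟨u, ⟨_, hu2⟩, rfl⟩
      refine ⟨⟨Int.fract_nonneg u, Int.fract_lt_one u⟩, ?_⟩
      have h2 := K.infl_shift_int hε hγ (-⌊u⌋) u
      rw [show u + ((-⌊u⌋ : ℤ) : ℝ) = Int.fract u from by rw [Int.fract]; push_cast; ring] at h2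
      exact h2.mpr hu2
    · intro x hx y hy hxy
      have hint : x - y = ((⌊x⌋ - ⌊y⌋ : ℤ) : ℝ) := by
        push_cast
        rw [← Int.self_sub_fract x, ← Int.self_sub_fract y, hxy]
        ring
      have habs : |x - y| < 1 := by
        rw [abs_sub_lt_iff]
        obtain ⟨⟨hx1, hx2⟩, -⟩ := hx
        obtain ⟨⟨hy1, hy2⟩, -⟩ := hy
        constructor <;> [linarith; linarith]
      have hz : (⌊x⌋ - ⌊y⌋ : ℤ) = 0 := by
        by_contra h5
        have h6 : (1:ℝ) ≤ |((⌊x⌋ - ⌊y⌋ : ℤ) : ℝ)| := by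
          rw [← Int.cast_abs]
          exact_mod_cast Int.one_le_abs h5
        rw [← hint] at h6
        linarith
      have : x - y = 0 := by rw [hint, hz]; simp
      linarith
  have htF : t ∉ {u | u ∈ Ico (t - 2⁻¹) (t + 2⁻¹) ∧ K.IsInflection u} := fun h => ht h.2.1
  have hopen := hFfin.isClosed.isOpen_compl
  obtain ⟨r, hr, hball⟩ := Metric.isOpen_iff.mp hopen t htF
  refine ⟨min r 2⁻¹, by positivity, fun u hu hinf => ?_⟩
  have h1 : u ∈ Metric.ball t r := by
    rw [Metric.mem_ball, Real.dist_eq]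
    exact lt_of_lt_of_le hu (min_le_left _ _)
  have h2 : u ∈ Ico (t - 2⁻¹) (t + 2⁻¹) := by
    have h3 := lt_of_lt_of_le hu (min_le_right _ _)
    rw [abs_sub_lt_iff] at h3
    constructor <;> [linarith [h3.2]; linarith [h3.1]]
  exact hball h1 ⟨h2, hinf⟩

end RPCurve

end AuxInfl
section AuxMain

namespace RPCurve

variable (K : RPCurve)

private lemma curv_eq {u : ℝ} (hreg : K.vel u ≠ 0) :
    K.curv u = ⟪K.acc u, cross (K.γ u) (K.vel u)⟫ / ‖K.vel u‖ ^ 3 := by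
  have hn : ‖K.vel u‖ ≠ 0 := norm_ne_zero_iff.mpr hreg
  rw [curv, unitTangent, cross_smul_right, real_inner_smul_right, inv_mul_eq_div, div_div]
  congr 1
  ring

end RPCurve

end AuxMain


set_option maxHeartbeats 2000000 in
/-- **The tangent-normal frame is well defined across type 1 cusps.**
Let `K` be a generic closed oriented singular curve in `ℝP²` whose only singularities are
cusps of type 1.  At a type 1 cusp, the orientations of the tangent geodesic `τ_p`
(recorded by the unit tangent) and of the normal geodesic `ν_p` (recorded by the unit
normal towards the centre of curvature) both reverse as the cusp is traversed, and
consequently the black-and-white colouring of the tangent-normal frame `F_p` is unchanged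
as `p` passes through the cusp point. -/
theorem frame_coloring_through_type1_cusp (K : RPCurve) (hgen : K.IsGeneric)
    (hcusp : ∀ t, K.IsCusp t → K.IsCusp1 t) :
    ∀ t, K.IsCusp1 t →
      ∃ Tl Tr Nl Nr : V3,
        Filter.Tendsto K.unitTangent (𝓝[<] t) (𝓝 Tl) ∧
        Filter.Tendsto K.unitTangent (𝓝[>] t) (𝓝 Tr) ∧
        Filter.Tendsto K.normalDir (𝓝[<] t) (𝓝 Nl) ∧
        Filter.Tendsto K.normalDir (𝓝[>] t) (𝓝 Nr) ∧
        Tl = -Tr ∧ Nl = -Nr ∧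
        {x : V3 | 0 < ⟪Tl, x⟫ * ⟪Nl, x⟫} = {x : V3 | 0 < ⟪Tr, x⟫ * ⟪Nr, x⟫} := by
  intro t ht
  obtain ⟨hcu, hA, δ₀, hδ₀, hside⟩ := ht
  have hvel : K.vel t = 0 := hcu
  set p : V3 := K.γ t with hp
  set A : V3 := K.acc t with hA'
  set a : V3 := ‖A‖⁻¹ • A with ha
  set m : V3 := cross p A with hm
  -- the various local neighbourhoods
  obtain ⟨δr, hδr, hregδ⟩ := eventually_punct (K.eventually_regular hvel hA)
  obtain ⟨δφ, hδφ, hmnδ⟩ := eventually_punct (K.eventually_mn hvel hA)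
  obtain ⟨δi, hδi, hinflδ⟩ := K.no_infl_near hgen (show ¬ K.Regular t from fun hr => hr hvel)
  set δ : ℝ := min (min δr δφ) (min δi δ₀) with hδdef
  have hδ : 0 < δ := by
    apply lt_min (lt_min hδr hδφ) (lt_min hδi hδ₀)
  have hδ1 : δ ≤ δr := le_trans (min_le_left _ _) (min_le_left _ _)
  have hδ2 : δ ≤ δφ := le_trans (min_le_left _ _) (min_le_right _ _)
  have hδ3 : δ ≤ δi := le_trans (min_le_right _ _) (min_le_left _ _)
  have hδ4 : δ ≤ δ₀ := le_trans (min_le_right _ _) (min_le_right _ _)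
  have hsubR : ∀ u ∈ Ioo t (t + δ), u ≠ t ∧ |u - t| < δ := by
    intro u hu
    refine ⟨ne_of_gt hu.1, ?_⟩
    rw [abs_of_pos (by linarith [hu.1])]
    linarith [hu.2]
  have hsubL : ∀ u ∈ Ioo (t - δ) t, u ≠ t ∧ |u - t| < δ := by
    intro u hu
    refine ⟨ne_of_lt hu.2, ?_⟩
    rw [abs_of_neg (by linarith [hu.2])]
    linarith [hu.1]
  have hregR : ∀ u ∈ Ioo t (t + δ), K.vel u ≠ 0 := fun u hu =>
    hregδ u (hsubR u hu).1 (lt_of_lt_of_le (hsubR u hu).2 hδ1)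
  have hregL : ∀ u ∈ Ioo (t - δ) t, K.vel u ≠ 0 := fun u hu =>
    hregδ u (hsubL u hu).1 (lt_of_lt_of_le (hsubL u hu).2 hδ1)
  have hmnR : ∀ u ∈ Ioo t (t + δ), 0 < ⟪m, cross (K.γ u) (K.vel u)⟫ := by
    intro u hu
    have h1 := hmnδ u (hsubR u hu).1 (lt_of_lt_of_le (hsubR u hu).2 hδ2)
    have h2 : 0 < u - t := by linarith [hu.1]
    nlinarith
  have hmnL : ∀ u ∈ Ioo (t - δ) t, ⟪m, cross (K.γ u) (K.vel u)⟫ < 0 := by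
    intro u hu
    have h1 := hmnδ u (hsubL u hu).1 (lt_of_lt_of_le (hsubL u hu).2 hδ2)
    have h2 : u - t < 0 := by linarith [hu.2]
    nlinarith
  -- the (unnormalised) curvature function
  set w : ℝ → ℝ := fun u => ⟪K.acc u, cross (K.γ u) (K.vel u)⟫ with hw
  have hwcont : Continuous w :=
    K.continuous_acc.inner (continuous_cross.comp (K.continuous_γ.prodMk K.continuous_vel))
  have hwneR : ∀ u ∈ Ioo t (t + δ), w u ≠ 0 := by
    intro u hu hw0
    have hw0' : ⟪K.acc u, cross (K.γ u) (K.vel u)⟫ = 0 := hw0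
    have h1 := hinflδ u (lt_of_lt_of_le (hsubR u hu).2 hδ3)
    exact h1 ⟨hregR u hu, by rw [K.curv_eq (hregR u hu), hw0', zero_div]⟩
  have hwneL : ∀ u ∈ Ioo (t - δ) t, w u ≠ 0 := by
    intro u hu hw0
    have hw0' : ⟪K.acc u, cross (K.γ u) (K.vel u)⟫ = 0 := hw0
    have h1 := hinflδ u (lt_of_lt_of_le (hsubL u hu).2 hδ3)
    exact h1 ⟨hregL u hu, by rw [K.curv_eq (hregL u hu), hw0', zero_div]⟩
  have hsignR := sign_const hwcont.continuousOn hwneR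
  have hsignL := sign_const hwcont.continuousOn hwneL
  -- side condition from the type 1 cusp, restricted to our interval
  have hsideδ : ∀ u ∈ Ioo (t - δ) t, ∀ v ∈ Ioo t (t + δ),
      ⟪m, K.γ u⟫ * ⟪m, K.γ v⟫ < 0 := by
    intro u hu v hv
    exact hside u ⟨by linarith [hu.1], hu.2⟩ v ⟨hv.1, by linarith [hv.2]⟩
  -- limits of the normalized inner products (needed by the core lemmas)
  have hTr := K.tendsto_unitTangent_right hvel hA
  have hTl := K.tendsto_unitTangent_left hvel hA
  have hma : ⟪m, a⟫ = 0 := by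
    rw [ha, real_inner_smul_right, hm, hp, hA', inner_cross_right, mul_zero]
  have hlimR : ∀ c : ℝ, Tendsto (fun u => c * (⟪m, K.vel u⟫ / ‖K.vel u‖)) (𝓝[>] t) (𝓝 0) := by
    intro c
    have h1 : Tendsto (fun u => c * ⟪m, K.unitTangent u⟫) (𝓝[>] t) (𝓝 (c * ⟪m, a⟫)) :=
      (tendsto_const_nhds.inner hTr).const_mul c
    rw [hma, mul_zero] at h1
    apply h1.congr
    intro u
    rw [RPCurve.unitTangent, real_inner_smul_right]
    ring
  have hlimL : ∀ c : ℝ, Tendsto (fun u => c * (⟪m, K.vel u⟫ / ‖K.vel u‖)) (𝓝[<] t) (𝓝 0) := by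
    intro c
    have h1 : Tendsto (fun u => c * ⟪m, K.unitTangent u⟫) (𝓝[<] t) (𝓝 (c * ⟪m, -a⟫)) :=
      (tendsto_const_nhds.inner hTl).const_mul c
    rw [inner_neg_right, hma, neg_zero, mul_zero] at h1
    apply h1.congr
    intro u
    rw [RPCurve.unitTangent, real_inner_smul_right]
    ring
  have hmp : ⟪m, K.γ t⟫ = 0 := by rw [hm, hp, hA', inner_cross_left]
  -- base points
  have hr₀ : t + δ / 2 ∈ Ioo t (t + δ) := ⟨by linarith, by linarith⟩
  have hl₀ : t - δ / 2 ∈ Ioo (t - δ) t := ⟨by linarith, by linarith⟩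
  -- Claim 1 : on the right, w and the side function have the same sign.
  have claimR : ∀ v ∈ Ioo t (t + δ), 0 < w v * ⟪m, K.γ v⟫ := by
    intro v hv
    by_contra hcon
    push_neg at hcon
    have hv0 : ⟪m, K.γ v⟫ ≠ 0 := by
      intro h0
      have := hsideδ (t - δ / 2) hl₀ v hv
      rw [h0, mul_zero] at this
      exact lt_irrefl 0 this
    have hneg : w v * ⟪m, K.γ v⟫ < 0 := lt_of_le_of_ne hcon (mul_ne_zero (hwneR v hv) hv0)
    apply K.coreR t m (w v) δ hδ hmp (hlimR (w v)) hregR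
    · intro u hu
      have h1 := hsignR v hv u hu
      have h2 := hmnR u hu
      simp only [hw] at h1 ⊢
      nlinarith
    · intro u hu
      have h1 := hsideδ (t - δ / 2) hl₀ v hv
      have h2 := hsideδ (t - δ / 2) hl₀ u hu
      exact sgn_ac_neg hneg (sgn_bc h1 h2)
  -- Claim 2 : on the left, w and the side function have opposite signs.
  have claimL : ∀ v ∈ Ioo (t - δ) t, w v * ⟪m, K.γ v⟫ < 0 := by
    intro v hv
    by_contra hcon
    push_neg at hcon
    have hv0 : ⟪m, K.γ v⟫ ≠ 0 := by
      intro h0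
      have := hsideδ v hv (t + δ / 2) hr₀
      rw [h0, zero_mul] at this
      exact lt_irrefl 0 this
    have hpos : 0 < w v * ⟪m, K.γ v⟫ :=
      lt_of_le_of_ne hcon (Ne.symm (mul_ne_zero (hwneL v hv) hv0))
    apply K.coreL t m (-(w v)) δ hδ hmp (hlimL (-(w v))) hregL
    · intro u hu
      have h1 := hsignL v hv u hu
      have h2 := hmnL u hu
      simp only [hw] at h1 ⊢
      nlinarith
    · intro u hu
      -- need : -(w v) * ⟪m, K.γ u⟫ < 0, i.e. 0 < w v * ⟪m, K.γ u⟫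
      have h1 := hsideδ u hu (t + δ / 2) hr₀
      have h2 := hsideδ v hv (t + δ / 2) hr₀
      rw [mul_comm] at h1 h2
      have h3 : 0 < ⟪m, K.γ v⟫ * ⟪m, K.γ u⟫ := sgn_bc h2 h1
      have h4 : 0 < w v * ⟪m, K.γ u⟫ := sgn_ac_pos hpos h3
      linarith
  -- hence w has the same sign on both sides
  have hwlr : 0 < w (t - δ / 2) * w (t + δ / 2) := by
    have h1 := claimR (t + δ / 2) hr₀
    have h2 := claimL (t - δ / 2) hl₀
    have h3 := hsideδ (t - δ / 2) hl₀ (t + δ / 2) hr₀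
    rw [mul_comm] at h1 h2
    exact sgn_bc h2 (sgn_ac_neg h3 h1)
  set σ : ℝ := posSign (w (t + δ / 2)) with hσ
  -- identification of posSign of curvature on each side
  have hposR : ∀ u ∈ Ioo t (t + δ), posSign (K.curv u) = σ := by
    intro u hu
    rw [K.curv_eq (hregR u hu), posSign_div_pos (pow_pos (norm_pos_iff.mpr (hregR u hu)) 3)]
    exact posSign_eq_of_mul_pos (hsignR u hu (t + δ / 2) hr₀)
  have hposL : ∀ u ∈ Ioo (t - δ) t, posSign (K.curv u) = σ := by
    intro u hu
    rw [K.curv_eq (hregL u hu), posSign_div_pos (pow_pos (norm_pos_iff.mpr (hregL u hu)) 3)]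
    have h1 : 0 < w u * w (t - δ / 2) := hsignL u hu (t - δ / 2) hl₀
    exact (posSign_eq_of_mul_pos h1).trans (posSign_eq_of_mul_pos hwlr)
  -- limits of the frame
  have hγt : Tendsto K.γ (𝓝 t) (𝓝 p) := K.continuous_γ.tendsto t
  have hcrossR : Tendsto (fun u => cross (K.γ u) (K.unitTangent u)) (𝓝[>] t)
      (𝓝 (cross p a)) :=
    (continuous_cross.tendsto (p, a)).comp
      ((hγt.mono_left nhdsWithin_le_nhds).prodMk_nhds hTr)
  have hcrossL : Tendsto (fun u => cross (K.γ u) (K.unitTangent u)) (𝓝[<] t)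
      (𝓝 (cross p (-a))) :=
    (continuous_cross.tendsto (p, -a)).comp
      ((hγt.mono_left nhdsWithin_le_nhds).prodMk_nhds hTl)
  have hNr : Tendsto K.normalDir (𝓝[>] t) (𝓝 (σ • cross p a)) := by
    apply Tendsto.congr' _ (hcrossR.const_smul σ)
    filter_upwards [Ioo_mem_nhdsGT_of_mem (show t ∈ Ico t (t + δ) from ⟨le_refl t, by linarith⟩)]
      with u hu
    rw [RPCurve.normalDir, hposR u hu]
  have hNl : Tendsto K.normalDir (𝓝[<] t) (𝓝 (-(σ • cross p a))) := by
    have h1 : σ • cross p (-a) = -(σ • cross p a) := by rw [cross_neg_right, smul_neg]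
    rw [← h1]
    apply Tendsto.congr' _ (hcrossL.const_smul σ)
    filter_upwards [Ioo_mem_nhdsLT_of_mem (show t ∈ Ioc (t - δ) t from ⟨by linarith, le_refl t⟩)]
      with u hu
    rw [RPCurve.normalDir, hposL u hu]
  refine ⟨-a, a, -(σ • cross p a), σ • cross p a, hTl, hTr, hNl, hNr, rfl, rfl, ?_⟩
  ext x
  simp only [Set.mem_setOf_eq, inner_neg_left, neg_mul_neg]


end
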